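/- With X₁,…,X₄ as the translation and helical-rotation symmetry vector fields of the rotating shallow water equations, the four vector fields Y₁ = X₂ − X₄, Y₂ = X₃ − X₁, Y₃ = X₁ + X₃, Y₄ = X₂ + X₄ commute pairwise: [Yᵢ, Yⱼ] = 0 for all i, j ∈ {1,2,3,4}. -/
import Mathlib


/-- Partial derivative of a function on ℝ⁶ in the j-th coordinate direction. -/
noncomputable def pderiv6 (j : Fin 6) (F : (Fin 6 → ℝ) → ℝ) (p : Fin 6 → ℝ) : ℝ :=
  deriv (fun s => F (Function.update p j s)) (p j)

/-- Commutator of two vector fields on ℝ⁶, viewed as first-order differential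
operators: [X,Y]ⁱ = Xʲ ∂ⱼYⁱ − Yʲ ∂ⱼXⁱ. -/
noncomputable def vfBracket (X Y : (Fin 6 → ℝ) → Fin 6 → ℝ) :
    (Fin 6 → ℝ) → Fin 6 → ℝ :=
  fun p i => (∑ j, X p j * pderiv6 j (fun q => Y q i) p)
           - (∑ j, Y p j * pderiv6 j (fun q => X q i) p)

/-- A field whose components depend only on the 0-th coordinate and whose
0-th component vanishes. -/
def TimeOnly (Z : (Fin 6 → ℝ) → Fin 6 → ℝ) : Prop :=
  ∃ g : ℝ → Fin 6 → ℝ, (∀ q, Z q = g (q 0)) ∧ ∀ t, g t 0 = 0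

lemma pderiv6_time_only (j : Fin 6) (hj : j ≠ 0) (g : ℝ → ℝ) (p : Fin 6 → ℝ) :
    pderiv6 j (fun q => g (q 0)) p = 0 := by
  unfold pderiv6
  have h : (fun s => g (Function.update p j s 0)) = fun _ : ℝ => g (p 0) := by
    funext s
    rw [Function.update_of_ne (Ne.symm hj)]
  rw [h, deriv_const]

lemma sum_zero_of_time_only (Z W : (Fin 6 → ℝ) → Fin 6 → ℝ)
    (hZ : TimeOnly Z) (hW : TimeOnly W) (p : Fin 6 → ℝ) (i : Fin 6) :
    (∑ j, Z p j * pderiv6 j (fun q => W q i) p) = 0 := by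
  obtain ⟨gZ, hgZ, hgZ0⟩ := hZ
  obtain ⟨gW, hgW, _⟩ := hW
  apply Finset.sum_eq_zero
  intro j _
  rcases eq_or_ne j 0 with h0 | h0
  · subst h0
    rw [hgZ, hgZ0, zero_mul]
  · have : (fun q : Fin 6 → ℝ => W q i) = fun q => (fun t => gW t i) (q 0) := by
      funext q; rw [hgW]
    rw [this]
    exact mul_eq_zero_of_right _ (pderiv6_time_only j h0 (fun t => gW t i) p)

lemma bracket_zero_of_time_only (Z W : (Fin 6 → ℝ) → Fin 6 → ℝ)
    (hZ : TimeOnly Z) (hW : TimeOnly W) : vfBracket Z W = 0 := by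
  funext p i
  show (∑ j, Z p j * pderiv6 j (fun q => W q i) p)
      - (∑ j, W p j * pderiv6 j (fun q => Z q i) p) = 0
  rw [sum_zero_of_time_only Z W hZ hW, sum_zero_of_time_only W Z hW hZ, sub_zero]

/-- The fields Y₁ = X₂ − X₄, Y₂ = X₃ − X₁, Y₃ = X₁ + X₃, Y₄ = X₂ + X₄ built
from the translation and helical-rotation symmetries of the rotating shallow
water equations commute pairwise. -/
theorem abelian_nilradical_of_rsw_symmetries
    (f : ℝ) (hf : f ≠ 0)
    (X₁ X₂ X₃ X₄ Y₁ Y₂ Y₃ Y₄ : (Fin 6 → ℝ) → Fin 6 → ℝ)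
    (hX₁ : X₁ = fun _ => ![0, 1, 0, 0, 0, 0])
    (hX₂ : X₂ = fun _ => ![0, 0, 1, 0, 0, 0])
    (hX₃ : X₃ = fun p =>
      ![0, Real.cos (f * p 0), -Real.sin (f * p 0),
        -(f * Real.sin (f * p 0)), -(f * Real.cos (f * p 0)), 0])
    (hX₄ : X₄ = fun p =>
      ![0, Real.sin (f * p 0), Real.cos (f * p 0),
        f * Real.cos (f * p 0), -(f * Real.sin (f * p 0)), 0])
    (hY₁ : Y₁ = X₂ - X₄) (hY₂ : Y₂ = X₃ - X₁)
    (hY₃ : Y₃ = X₁ + X₃) (hY₄ : Y₄ = X₂ + X₄) :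
    ∀ Z ∈ ({Y₁, Y₂, Y₃, Y₄} : Set ((Fin 6 → ℝ) → Fin 6 → ℝ)),
    ∀ W ∈ ({Y₁, Y₂, Y₃, Y₄} : Set ((Fin 6 → ℝ) → Fin 6 → ℝ)),
      vfBracket Z W = 0 := by
  have h1 : TimeOnly Y₁ := by
    refine ⟨fun t => ![0, 0, 1, 0, 0, 0] - ![0, Real.sin (f * t), Real.cos (f * t),
      f * Real.cos (f * t), -(f * Real.sin (f * t)), 0], fun q => ?_, fun t => by simp⟩
    subst hY₁ hX₂ hX₄; rfl
  have h2 : TimeOnly Y₂ := by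
    refine ⟨fun t => ![0, Real.cos (f * t), -Real.sin (f * t),
      -(f * Real.sin (f * t)), -(f * Real.cos (f * t)), 0] - ![0, 1, 0, 0, 0, 0],
      fun q => ?_, fun t => by simp⟩
    subst hY₂ hX₃ hX₁; rfl
  have h3 : TimeOnly Y₃ := by
    refine ⟨fun t => ![0, 1, 0, 0, 0, 0] + ![0, Real.cos (f * t), -Real.sin (f * t),
      -(f * Real.sin (f * t)), -(f * Real.cos (f * t)), 0], fun q => ?_, fun t => by simp⟩
    subst hY₃ hX₁ hX₃; rfl
  have h4 : TimeOnly Y₄ := by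
    refine ⟨fun t => ![0, 0, 1, 0, 0, 0] + ![0, Real.sin (f * t), Real.cos (f * t),
      f * Real.cos (f * t), -(f * Real.sin (f * t)), 0], fun q => ?_, fun t => by simp⟩
    subst hY₄ hX₂ hX₄; rfl
  intro Z hZ W hW
  have hZ' : TimeOnly Z := by
    rcases hZ with h | h | h | h <;> subst h <;> assumption
  have hW' : TimeOnly W := by
    rcases hW with h | h | h | h <;> subst h <;> assumption
  exact bracket_zero_of_time_only Z W hZ' hW'
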